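/- For every x ∈ ℝ one has Q₁(x) := ψ'(x)·ψ'''(x) − (ψ''(x))² > 0. -/

import Mathlib

noncomputable section

open MeasureTheory Set

/-- The increasing fundamental solution `ψ` of the Ornstein–Uhlenbeck resolvent equation:
`ψ(x) = (1/Γ(ρ/k)) ∫₀^∞ t^{ρ/k − 1} exp(−t²/2 + ((x − μ)√(2k)/σ) t) dt`. -/
def psi (ρ k σ μ : ℝ) (x : ℝ) : ℝ :=
  (1 / Real.Gamma (ρ / k)) *
    ∫ t in Set.Ioi (0 : ℝ),
      t ^ (ρ / k - 1) * Real.exp (-t ^ 2 / 2 + ((x - μ) * Real.sqrt (2 * k) / σ) * t)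

namespace Stmt11Aux

/-- The basic parametric integral. -/
def J (p b m : ℝ) (x : ℝ) : ℝ :=
  ∫ t in Set.Ioi (0 : ℝ), t ^ p * Real.exp (-t ^ 2 / 2 + ((x - m) * b) * t)

lemma measAux' (c : ℝ) (p : ℝ) :
    Measurable (fun t : ℝ => t ^ p * Real.exp (-t ^ 2 / 2 + c * t)) := by
  have h1 : Measurable fun t : ℝ => t ^ p := measurable_id.pow measurable_const
  have h2 : Measurable fun t : ℝ => -t ^ 2 / 2 + c * t :=
    (((measurable_id.pow measurable_const).neg).div_const 2).add
      (measurable_const.mul measurable_id)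
  exact h1.mul h2.exp

lemma myIntegrable {p : ℝ} (hp : -1 < p) (c : ℝ) :
    IntegrableOn (fun t : ℝ => t ^ p * Real.exp (-t ^ 2 / 2 + c * t)) (Set.Ioi 0) := by
  have h : IntegrableOn
      (fun t : ℝ => Real.exp (c ^ 2) * (t ^ p * Real.exp (-(4 : ℝ)⁻¹ * t ^ 2)))
      (Set.Ioi 0) :=
    (integrableOn_rpow_mul_exp_neg_mul_sq (by norm_num) hp).const_mul _
  refine h.mono' ?_ ?_
  · exact (measAux' c p).aestronglyMeasurable
  · filter_upwards [ae_restrict_mem measurableSet_Ioi] with t ht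
    have ht0 : (0 : ℝ) < t := ht
    rw [Real.norm_eq_abs,
      abs_of_nonneg (mul_nonneg (Real.rpow_nonneg ht0.le p) (Real.exp_pos _).le)]
    have hb : -t ^ 2 / 2 + c * t ≤ c ^ 2 + -(4 : ℝ)⁻¹ * t ^ 2 := by
      nlinarith [sq_nonneg (t / 2 - c)]
    calc t ^ p * Real.exp (-t ^ 2 / 2 + c * t)
        ≤ t ^ p * Real.exp (c ^ 2 + -(4 : ℝ)⁻¹ * t ^ 2) :=
          mul_le_mul_of_nonneg_left (Real.exp_le_exp.2 hb) (Real.rpow_nonneg ht0.le p)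
      _ = Real.exp (c ^ 2) * (t ^ p * Real.exp (-(4 : ℝ)⁻¹ * t ^ 2)) := by
          rw [Real.exp_add]; ring



lemma J_hasDerivAt {p : ℝ} (hp : -1 < p) (b m x : ℝ) :
    HasDerivAt (J p b m) (b * J (p + 1) b m x) x := by
  set C : ℝ := (|x| + 1 + |m|) * |b| with hC
  have key := hasDerivAt_integral_of_dominated_loc_of_deriv_le
    (μ := volume.restrict (Set.Ioi 0)) (x₀ := x) (s := Metric.ball x 1)
    (F := fun y t => t ^ p * Real.exp (-t ^ 2 / 2 + ((y - m) * b) * t))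
    (F' := fun y t => (b * t) * (t ^ p * Real.exp (-t ^ 2 / 2 + ((y - m) * b) * t)))
    (bound := fun t => |b| * (t ^ (p + 1) * Real.exp (-t ^ 2 / 2 + C * t)))
    (Metric.ball_mem_nhds x one_pos)
    (Filter.Eventually.of_forall fun y =>
      (measAux' ((y - m) * b) p).aestronglyMeasurable)
    (myIntegrable hp _)
    (((measurable_const.mul measurable_id).mul
      (measAux' ((x - m) * b) p)).aestronglyMeasurable)
    (by
      filter_upwards [ae_restrict_mem measurableSet_Ioi] with t ht y hy
      have ht0 : (0 : ℝ) < t := ht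
      have hy1 : |y - x| < 1 := by
        rw [← Real.dist_eq]; exact Metric.mem_ball.1 hy
      have hcoeff : (y - m) * b ≤ C := by
        calc (y - m) * b ≤ |(y - m) * b| := le_abs_self _
          _ = |y - m| * |b| := abs_mul _ _
          _ ≤ (|x| + 1 + |m|) * |b| := by
              refine mul_le_mul_of_nonneg_right ?_ (abs_nonneg b)
              have h1 : |y - m| ≤ |y - x| + |x - m| := abs_sub_le y x m
              have h2 : |x - m| ≤ |x| + |m| := abs_sub _ _
              linarith
      have hexp : -t ^ 2 / 2 + ((y - m) * b) * t ≤ -t ^ 2 / 2 + C * t := by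
        have := mul_le_mul_of_nonneg_right hcoeff ht0.le
        linarith
      rw [Real.norm_eq_abs, abs_mul, abs_mul, abs_mul,
        abs_of_pos ht0, abs_of_nonneg (Real.rpow_nonneg ht0.le p),
        abs_of_pos (Real.exp_pos _)]
      calc |b| * t * (t ^ p * Real.exp (-t ^ 2 / 2 + ((y - m) * b) * t))
          ≤ |b| * t * (t ^ p * Real.exp (-t ^ 2 / 2 + C * t)) := by
            refine mul_le_mul_of_nonneg_left
              (mul_le_mul_of_nonneg_left (Real.exp_le_exp.2 hexp)
                (Real.rpow_nonneg ht0.le p)) ?_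
            positivity
        _ = |b| * (t ^ (p + 1) * Real.exp (-t ^ 2 / 2 + C * t)) := by
            rw [Real.rpow_add_one ht0.ne']; ring)
    ((myIntegrable (by linarith) C).const_mul |b|)
    (Filter.Eventually.of_forall fun t => by
      intro y _
      have h : HasDerivAt (fun y : ℝ => -t ^ 2 / 2 + ((y - m) * b) * t) (b * t) y := by
        have := (((hasDerivAt_id y).sub_const m).mul_const b).mul_const t
        simpa using this.const_add (-t ^ 2 / 2)
      have h2 := h.exp.const_mul (t ^ p)
      exact h2.congr_deriv (by ring))
  have heq : (∫ t in Set.Ioi (0 : ℝ),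
      (b * t) * (t ^ p * Real.exp (-t ^ 2 / 2 + ((x - m) * b) * t)))
      = b * J (p + 1) b m x := by
    rw [J, ← integral_const_mul]
    refine setIntegral_congr_fun measurableSet_Ioi fun t ht => ?_
    rw [Real.rpow_add_one (ne_of_gt ht)]
    ring
  have h2 := key.2
  rw [heq] at h2
  exact h2

lemma J_pos {p : ℝ} (hp : -1 < p) (b m x : ℝ) : 0 < J p b m x := by
  rw [J, setIntegral_pos_iff_support_of_nonneg_ae]
  · refine lt_of_lt_of_le ?_ (measure_mono (s := Set.Ioi (1 : ℝ)) ?_)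
    · simp [Real.volume_Ioi]
    · intro t ht
      have ht1 : (1 : ℝ) < t := ht
      have ht0 : (0:ℝ) < t := by linarith
      refine ⟨?_, Set.mem_Ioi.2 ht0⟩
      exact Function.mem_support.2
        (ne_of_gt (mul_pos (Real.rpow_pos_of_pos ht0 p) (Real.exp_pos _)))
  · filter_upwards [ae_restrict_mem measurableSet_Ioi] with t ht
    exact (mul_pos (Real.rpow_pos_of_pos ht p) (Real.exp_pos _)).le
  · exact myIntegrable hp _

end Stmt11Aux

open Stmt11Aux in
/-- For every `x ∈ ℝ`, `Q₁(x) := ψ'(x)ψ'''(x) − (ψ''(x))² > 0`. -/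
theorem stmt11 (ρ k σ μ : ℝ) (hρ : 0 < ρ) (hk : 0 < k) (hσ : 0 < σ) (x : ℝ) :
    0 < deriv (psi ρ k σ μ) x * deriv (deriv (deriv (psi ρ k σ μ))) x
      - (deriv (deriv (psi ρ k σ μ)) x) ^ 2 := by
  set a : ℝ := ρ / k with ha
  set b : ℝ := Real.sqrt (2 * k) / σ with hb
  have ha0 : 0 < a := div_pos hρ hk
  have hb0 : 0 < b := div_pos (Real.sqrt_pos.2 (by linarith)) hσ
  set c : ℝ := 1 / Real.Gamma a with hc
  have hc0 : 0 < c := by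
    have := Real.Gamma_pos_of_pos ha0
    positivity
  have hpsi : psi ρ k σ μ = fun y => c * J (a - 1) b μ y := by
    funext y
    simp only [psi, J, hc, ha, hb, mul_div_assoc]
  have hpa : (-1 : ℝ) < a - 1 := by linarith
  have e1 : deriv (psi ρ k σ μ) = fun y => c * b * J a b μ y := by
    funext y
    rw [hpsi]
    have h := ((J_hasDerivAt hpa b μ y).const_mul c).deriv
    rw [h]
    norm_num [mul_assoc]
  have e2 : deriv (deriv (psi ρ k σ μ)) = fun y => c * b * b * J (a + 1) b μ y := by
    funext y
    rw [e1]
    have h := ((J_hasDerivAt (by linarith : (-1:ℝ) < a) b μ y).const_mul (c * b)).deriv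
    rw [h]
    ring
  have e3 : deriv (deriv (deriv (psi ρ k σ μ)))
      = fun y => c * b * b * b * J (a + 2) b μ y := by
    funext y
    rw [e2]
    have h := ((J_hasDerivAt (by linarith : (-1:ℝ) < a + 1) b μ y).const_mul (c * b * b)).deriv
    rw [h]
    have : a + 1 + 1 = a + 2 := by ring
    rw [this]
    ring
  set A : ℝ := J a b μ x with hA
  set B : ℝ := J (a + 1) b μ x with hB
  set D : ℝ := J (a + 2) b μ x with hD
  have hApos : 0 < A := J_pos (by linarith) b μ x
  set l : ℝ := B / A with hl
  -- the key integral
  set K : ℝ := ∫ t in Set.Ioi (0 : ℝ),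
    (t - l) ^ 2 * (t ^ a * Real.exp (-t ^ 2 / 2 + ((x - μ) * b) * t)) with hK
  have hEq : EqOn
      (fun t : ℝ => (t - l) ^ 2 * (t ^ a * Real.exp (-t ^ 2 / 2 + ((x - μ) * b) * t)))
      (fun t : ℝ => t ^ (a + 2) * Real.exp (-t ^ 2 / 2 + ((x - μ) * b) * t)
        - (2 * l) * (t ^ (a + 1) * Real.exp (-t ^ 2 / 2 + ((x - μ) * b) * t))
        + l ^ 2 * (t ^ a * Real.exp (-t ^ 2 / 2 + ((x - μ) * b) * t)))
      (Set.Ioi 0) := by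
    intro t ht
    have ht0 : (0 : ℝ) < t := ht
    have h1 : t ^ (a + 1) = t ^ a * t := Real.rpow_add_one ht0.ne' a
    have h2 : t ^ (a + 2) = t ^ (a + 1) * t := by
      rw [show a + 2 = a + 1 + 1 by ring, Real.rpow_add_one ht0.ne']
    simp only [h2, h1]
    ring
  have hi0 := myIntegrable (by linarith : (-1:ℝ) < a) ((x - μ) * b)
  have hi1 := myIntegrable (by linarith : (-1:ℝ) < a + 1) ((x - μ) * b)
  have hi2 := myIntegrable (by linarith : (-1:ℝ) < a + 2) ((x - μ) * b)
  have hsub : IntegrableOn (fun t : ℝ =>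
      t ^ (a + 2) * Real.exp (-t ^ 2 / 2 + ((x - μ) * b) * t)
        - (2 * l) * (t ^ (a + 1) * Real.exp (-t ^ 2 / 2 + ((x - μ) * b) * t)))
      (Set.Ioi 0) := hi2.sub (hi1.const_mul (2 * l))
  have hKeq : K = D - 2 * l * B + l ^ 2 * A := by
    rw [hK, setIntegral_congr_fun measurableSet_Ioi hEq,
      integral_add hsub (hi0.const_mul (l ^ 2)),
      integral_sub hi2 (hi1.const_mul (2 * l)), integral_const_mul, integral_const_mul]
    try rw [hD, hB, hA]
    try simp only [J]
    try ring
  have hKpos : 0 < K := by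
    rw [hK, setIntegral_pos_iff_support_of_nonneg_ae]
    · refine lt_of_lt_of_le ?_ (measure_mono (s := Set.Ioi (|l| + 1)) ?_)
      · simp [Real.volume_Ioi]
      · intro t ht
        have ht1 : |l| + 1 < t := ht
        have ht0 : (0 : ℝ) < t := lt_of_le_of_lt (by positivity) ht1
        have htl : t ≠ l := by
          intro h
          have : l ≤ |l| := le_abs_self l
          linarith [h ▸ ht1]
        refine ⟨Function.mem_support.2 (ne_of_gt ?_), ht0⟩
        have h1 : (0:ℝ) < (t - l) ^ 2 := by
          have := sub_ne_zero_of_ne htl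
          positivity
        exact mul_pos h1 (mul_pos (Real.rpow_pos_of_pos ht0 a) (Real.exp_pos _))
    · filter_upwards [ae_restrict_mem measurableSet_Ioi] with t ht
      exact mul_nonneg (sq_nonneg _)
        (mul_pos (Real.rpow_pos_of_pos ht a) (Real.exp_pos _)).le
    · refine (IntegrableOn.congr_fun ?_ hEq.symm measurableSet_Ioi)
      exact (hi2.sub (hi1.const_mul (2 * l))).add (hi0.const_mul (l ^ 2))
  have hADB : 0 < A * D - B ^ 2 := by
    have h : A * D - B ^ 2 = A * K := by
      rw [hKeq, hl]
      field_simp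
      ring
    rw [h]
    exact mul_pos hApos hKpos
  have v1 : deriv (psi ρ k σ μ) x = c * b * A := by rw [e1]
  have v2 : deriv (deriv (psi ρ k σ μ)) x = c * b * b * B := by rw [e2]
  have v3 : deriv (deriv (deriv (psi ρ k σ μ))) x = c * b * b * b * D := by rw [e3]
  rw [v1, v2, v3]
  have hexpand : c * b * A * (c * b * b * b * D) - (c * b * b * B) ^ 2
      = (c * b * b) ^ 2 * (A * D - B ^ 2) := by ring
  rw [hexpand]
  have : (0:ℝ) < (c * b * b) ^ 2 := by positivity
  exact mul_pos this hADB
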